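/- arXiv:1904.01609 — 3 statements merged into one kernel-verified Lean document; each statement's English description precedes it below -/
import Mathlib

section
/- Let a, b > 0 be real numbers and define f(x) = 1/(−a·ln x + b) for x > 0. Then for every c with 0 < c < 1 and every x with 0 < x < e^{−2}, one has f(c·x) ≥ c·f(x). -/
/-- Lemma 3.1 (second part): for `a, b > 0`, `f x = 1/(-a * ln x + b)`,
`0 < c < 1` and `0 < x < e⁻²`, one has `f (c*x) ≥ c * f x`. -/
theorem stmt1 (a b c x : ℝ) (ha : 0 < a) (hb : 0 < b)
    (hc0 : 0 < c) (hc1 : c < 1)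
    (hx0 : 0 < x) (hx : x < Real.exp (-2)) :
    1 / (-a * Real.log (c * x) + b) ≥ c * (1 / (-a * Real.log x + b)) := by
  have hlx : Real.log x < -2 := by
    have := Real.log_lt_log hx0 hx
    rwa [Real.log_exp] at this
  have hlc : Real.log c < 0 := Real.log_neg hc0 hc1
  have hD : 0 < -a * Real.log x + b := by nlinarith
  rw [Real.log_mul hc0.ne' hx0.ne']
  have hD1 : 0 < -a * (Real.log c + Real.log x) + b := by nlinarith
  have hkey : c * (-Real.log c) ≤ 1 - c := by
    have h := Real.log_le_sub_one_of_pos (show (0:ℝ) < c⁻¹ by positivity)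
    rw [Real.log_inv] at h
    have hc := hc0
    nlinarith [mul_le_mul_of_nonneg_left h hc0.le, mul_inv_cancel₀ hc0.ne']
  rw [ge_iff_le, mul_one_div, div_le_div_iff₀ hD hD1]
  nlinarith [mul_le_mul_of_nonneg_left hkey ha.le,
    mul_nonneg (by linarith : (0:ℝ) ≤ 1 - c)
      (by nlinarith : (0:ℝ) ≤ -a * Real.log x + b - a)]
end

section
/- Let a, b > 0 be real numbers and define f(x) = 1/(−a·ln x + b) for x > 0. Then for every c with 0 < c < 1 and every x with 0 < x < e^{−2}, one has f(c·x) + f((1−c)·x) ≥ f(x). -/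
/-- Lemma 3.1 (third part): for `a, b > 0`, `f x = 1/(-a * ln x + b)`,
`0 < c < 1` and `0 < x < e⁻²`, one has `f (c*x) + f ((1-c)*x) ≥ f x`. -/
theorem stmt2 (a b c x : ℝ) (ha : 0 < a) (hb : 0 < b)
    (hc0 : 0 < c) (hc1 : c < 1)
    (hx0 : 0 < x) (hx : x < Real.exp (-2)) :
    1 / (-a * Real.log (c * x) + b) + 1 / (-a * Real.log ((1 - c) * x) + b) ≥
      1 / (-a * Real.log x + b) := by
  have hc1' : 0 < 1 - c := by linarith
  have hlogx : Real.log x < -2 := by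
    have := Real.log_lt_log hx0 hx
    rwa [Real.log_exp] at this
  set D : ℝ := -a * Real.log x + b with hDdef
  have hD : 2 * a + b < D := by
    have : 2 * a < -a * Real.log x := by nlinarith
    simp only [hDdef]; linarith
  have hD0 : 0 < D := by linarith
  set s : ℝ := -Real.log c with hs
  set t : ℝ := -Real.log (1 - c) with ht
  have hs0 : 0 < s := by
    have := Real.log_neg hc0 hc1; simp [hs]; linarith
  have ht0 : 0 < t := by
    have := Real.log_neg hc1' (by linarith); simp [ht]; linarith
  -- bounds: s ≤ (1-c)/c, t ≤ c/(1-c)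
  have hsb : s ≤ (1 - c) / c := by
    have h1 : Real.log (1/c) ≤ 1/c - 1 := Real.log_le_sub_one_of_pos (by positivity)
    rw [one_div, Real.log_inv] at h1
    have : (1 - c)/c = c⁻¹ - 1 := by field_simp
    rw [this, hs]; linarith
  have htb : t ≤ c / (1 - c) := by
    have h1 : Real.log (1/(1-c)) ≤ 1/(1-c) - 1 := Real.log_le_sub_one_of_pos (by positivity)
    rw [one_div, Real.log_inv] at h1
    have : c/(1-c) = (1-c)⁻¹ - 1 := by field_simp; ring
    rw [this, ht]; linarith
  have hst : s * t ≤ 1 := by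
    have := mul_le_mul hsb htb ht0.le (by positivity)
    have heq : (1 - c) / c * (c / (1 - c)) = 1 := by field_simp
    linarith [heq ▸ this]
  have hlc : Real.log (c * x) = Real.log c + Real.log x := Real.log_mul hc0.ne' hx0.ne'
  have hl1c : Real.log ((1 - c) * x) = Real.log (1 - c) + Real.log x :=
    Real.log_mul hc1'.ne' hx0.ne'
  have hP : -a * Real.log (c * x) + b = D + a * s := by
    rw [hlc]; simp [hDdef, hs]; ring
  have hQ : -a * Real.log ((1 - c) * x) + b = D + a * t := by
    rw [hl1c]; simp [hDdef, ht]; ring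
  rw [hP, hQ]
  have hP0 : 0 < D + a * s := by positivity
  have hQ0 : 0 < D + a * t := by positivity
  rw [ge_iff_le, div_add_div _ _ hP0.ne' hQ0.ne',
    div_le_div_iff₀ hD0 (mul_pos hP0 hQ0)]
  have haD : a < D := by linarith
  nlinarith [mul_pos ha ha, mul_pos hD0 (mul_pos ha (mul_pos hs0 ht0)), sq_nonneg (D - a)]
end

section
/- Let a, b, k > 0 and 0 < c ≤ 1 be real numbers, and let λ satisfy 0 < λ < min(e^{−2}, e^{(b−k−1)/a}). Setting f₁(x) = 1/(b − a·ln x) and f₂(x) = 1/(b − a·ln x − k), one has f₁(c·λ)/f₂(λ) > c/(1+k); equivalently, (b − k − a·ln λ)/(b − a·ln(c·λ)) > c/(1+k). -/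
/-- Capacity estimate in the proof of Corollary 3.6: with `f₁ x = 1/(b - a ln x)`,
`f₂ x = 1/(b - a ln x - k)`, `0 < c ≤ 1` and
`0 < λ < min (e⁻²) (e^{(b-k-1)/a})`, one has `f₁ (c*λ) / f₂ λ > c/(1+k)`;
equivalently `(b - k - a ln λ)/(b - a ln (c*λ)) > c/(1+k)`. -/
theorem stmt8 (a b k c lam : ℝ) (ha : 0 < a) (hb : 0 < b) (hk : 0 < k)
    (hc0 : 0 < c) (hc1 : c ≤ 1) (hl0 : 0 < lam)
    (hl : lam < min (Real.exp (-2)) (Real.exp ((b - k - 1) / a))) :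
    (1 / (b - a * Real.log (c * lam))) / (1 / (b - a * Real.log lam - k)) >
        c / (1 + k) ∧
      (b - k - a * Real.log lam) / (b - a * Real.log (c * lam)) > c / (1 + k) := by
  set L := Real.log lam with hLdef
  set lc := Real.log c with hlcdef
  have hlog : Real.log (c * lam) = lc + L := Real.log_mul (ne_of_gt hc0) (ne_of_gt hl0)
  have hl1 : lam < Real.exp (-2) := lt_of_lt_of_le hl (min_le_left _ _)
  have hl2 : lam < Real.exp ((b - k - 1) / a) := lt_of_lt_of_le hl (min_le_right _ _)
  have hL1 : L < -2 := by
    rw [hLdef, ← Real.log_exp (-2)]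
    exact Real.log_lt_log hl0 hl1
  have hL2 : L < (b - k - 1) / a := by
    rw [hLdef, ← Real.log_exp ((b - k - 1) / a)]
    exact Real.log_lt_log hl0 hl2
  have hN1 : 1 < b - k - a * L := by
    have := (lt_div_iff₀' ha).mp hL2
    linarith
  have hlc0 : lc ≤ 0 := Real.log_nonpos (le_of_lt hc0) hc1
  have hclc : c - 1 ≤ c * lc := by
    have h := Real.log_le_sub_one_of_pos (show (0:ℝ) < 1 / c by positivity)
    rw [Real.log_div one_ne_zero (ne_of_gt hc0), Real.log_one] at h
    have := mul_le_mul_of_nonneg_left h (le_of_lt hc0)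
    have hc' : c * (1 / c) = 1 := by field_simp
    nlinarith
  have hD1 : 1 + k < b - a * (lc + L) := by nlinarith
  have hD0 : 0 < b - a * (lc + L) := by nlinarith
  have hN0 : 0 < b - a * L - k := by linarith
  have hk1 : 0 < 1 + k := by linarith
  -- key facts
  have h1 : 0 < k * (b - k - a * L - 1) := mul_pos hk (by linarith)
  have h2 : 0 ≤ a * (1 - c) := mul_nonneg (le_of_lt ha) (by linarith)
  have h3 : 0 ≤ (b - a * L - 2 * a) * (1 - c) := by
    apply mul_nonneg _ (by linarith)
    nlinarith
  have h4 : a * c - a ≤ a * (c * lc) := by nlinarith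
  have key : c * (b - a * (lc + L)) < (b - k - a * L) * (1 + k) := by nlinarith
  have main : (b - k - a * L) / (b - a * (lc + L)) > c / (1 + k) := by
    rw [gt_iff_lt, div_lt_div_iff₀ hk1 hD0]
    linarith [key]
  constructor
  · rw [hlog]
    have heq : (1 / (b - a * (lc + L))) / (1 / (b - a * L - k)) =
        (b - a * L - k) / (b - a * (lc + L)) := by
      field_simp
    rw [heq]
    have : b - a * L - k = b - k - a * L := by ring
    rw [this]
    exact main
  · rw [hlog]
    exact main
end
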